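/- Let P be symmetric positive definite of size n, A_K ∈ ℝ^{n×n}, E ∈ ℝ^{n×1}, C ∈ ℝ^{1×n}. If the (n+1)×(n+1) matrix [[P − A_KᵀPA_K, −A_KᵀPE − ½Cᵀ],[−EᵀPA_K − ½C, 1 − EᵀPE]] is positive definite, then for every function φ: ℝ → ℝ satisfying φ(y)(φ(y) − y) ≤ 0 for all y, and every nonzero x ∈ ℝ^n, one has (A_Kx + Eφ(Cx))ᵀP(A_Kx + Eφ(Cx)) < xᵀPx. -/

import Mathlib

open Matrix

lemma mulVec_dot_symm {n : ℕ} (P : Matrix (Fin n) (Fin n) ℝ)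
    (hP : Pᵀ = P) (a : Fin n → ℝ) (b : Fin n → ℝ) :
    a ⬝ᵥ (P *ᵥ b) = b ⬝ᵥ (P *ᵥ a) := by
  rw [Matrix.dotProduct_mulVec, ← Matrix.mulVec_transpose, hP, dotProduct_comm]

lemma dot_transpose_mulVec {m k : Type*} [Fintype m] [Fintype k] (A : Matrix m k ℝ)
    (v : k → ℝ) (w : m → ℝ) :
    v ⬝ᵥ (Aᵀ *ᵥ w) = (A *ᵥ v) ⬝ᵥ w := by
  rw [Matrix.dotProduct_mulVec, Matrix.vecMul_transpose]

/-- Feasibility of the LMI (19) implies that `V(x) = xᵀPx` certifies absolute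
stability of `x(t+1) = A_K x(t) + Eφ(Cx(t))` for all sector-bounded `φ`. -/
theorem lmi_implies_absolute_stability {n : ℕ}
    (AK : Matrix (Fin n) (Fin n) ℝ) (E : Matrix (Fin n) (Fin 1) ℝ)
    (C : Matrix (Fin 1) (Fin n) ℝ) (P : Matrix (Fin n) (Fin n) ℝ)
    (hP : P.PosDef)
    (hLMI : (fromBlocks (P - AKᵀ * P * AK)
        (-(AKᵀ * P * E) - (1/2 : ℝ) • Cᵀ)
        (-(Eᵀ * P * AK) - (1/2 : ℝ) • C)
        ((1 : Matrix (Fin 1) (Fin 1) ℝ) - Eᵀ * P * E)).PosDef) :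
    ∀ φ : ℝ → ℝ, (∀ y : ℝ, φ y * (φ y - y) ≤ 0) →
      ∀ x : Fin n → ℝ, x ≠ 0 →
        (AK *ᵥ x + E *ᵥ (fun _ => φ ((C *ᵥ x) 0))) ⬝ᵥ
            (P *ᵥ (AK *ᵥ x + E *ᵥ (fun _ => φ ((C *ᵥ x) 0)))) <
          x ⬝ᵥ (P *ᵥ x) := by
  intro φ hφ x hx
  set u : Fin 1 → ℝ := fun _ => φ ((C *ᵥ x) 0) with hu
  have hz : (Sum.elim x u : Fin n ⊕ Fin 1 → ℝ) ≠ 0 := by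
    intro h
    apply hx
    funext i
    have := congrFun h (Sum.inl i)
    simpa using this
  have hpos := hLMI.dotProduct_mulVec_pos hz
  rw [star_trivial] at hpos
  have hPsymm : Pᵀ = P := hP.1
  have hsec : u 0 * (u 0 - (C *ᵥ x) 0) ≤ 0 := hφ ((C *ᵥ x) 0)
  -- key algebraic identity
  have key : (Sum.elim x u) ⬝ᵥ
      ((fromBlocks (P - AKᵀ * P * AK)
        (-(AKᵀ * P * E) - (1/2 : ℝ) • Cᵀ)
        (-(Eᵀ * P * AK) - (1/2 : ℝ) • C)
        ((1 : Matrix (Fin 1) (Fin 1) ℝ) - Eᵀ * P * E)) *ᵥ (Sum.elim x u)) =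
      x ⬝ᵥ (P *ᵥ x)
        - (AK *ᵥ x + E *ᵥ u) ⬝ᵥ (P *ᵥ (AK *ᵥ x + E *ᵥ u))
        + (u 0 * u 0 - u 0 * (C *ᵥ x) 0) := by
    rw [Matrix.fromBlocks_mulVec, sumElim_dotProduct_sumElim]
    have e1 : (AKᵀ * P * AK) *ᵥ x = AKᵀ *ᵥ (P *ᵥ (AK *ᵥ x)) := by
      rw [Matrix.mulVec_mulVec, Matrix.mulVec_mulVec]
    have e2 : (AKᵀ * P * E) *ᵥ u = AKᵀ *ᵥ (P *ᵥ (E *ᵥ u)) := by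
      rw [Matrix.mulVec_mulVec, Matrix.mulVec_mulVec]
    have e3 : (Eᵀ * P * AK) *ᵥ x = Eᵀ *ᵥ (P *ᵥ (AK *ᵥ x)) := by
      rw [Matrix.mulVec_mulVec, Matrix.mulVec_mulVec]
    have e4 : (Eᵀ * P * E) *ᵥ u = Eᵀ *ᵥ (P *ᵥ (E *ᵥ u)) := by
      rw [Matrix.mulVec_mulVec, Matrix.mulVec_mulVec]
    simp only [Matrix.sub_mulVec, Matrix.add_mulVec, Matrix.neg_mulVec, Matrix.smul_mulVec,
      dotProduct_add, dotProduct_sub, dotProduct_neg,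
      dotProduct_smul, Matrix.one_mulVec, Matrix.mulVec_add,
      Sum.elim_comp_inl, Sum.elim_comp_inr, smul_eq_mul]
    rw [e1, e2, e3, e4, dot_transpose_mulVec AK, dot_transpose_mulVec AK,
      dot_transpose_mulVec C, dot_transpose_mulVec E, dot_transpose_mulVec E]
    have h5 : (E *ᵥ u) ⬝ᵥ (P *ᵥ (AK *ᵥ x)) = (AK *ᵥ x) ⬝ᵥ (P *ᵥ (E *ᵥ u)) :=
      mulVec_dot_symm P hPsymm _ _
    have h2 : (C *ᵥ x) ⬝ᵥ u = u 0 * (C *ᵥ x) 0 := by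
      simp [dotProduct, Fin.sum_univ_one, mul_comm]
    have h3 : u ⬝ᵥ (C *ᵥ x) = u 0 * (C *ᵥ x) 0 := by
      simp [dotProduct, Fin.sum_univ_one]
    have h6 : u ⬝ᵥ u = u 0 * u 0 := by
      simp [dotProduct, Fin.sum_univ_one]
    simp only [add_dotProduct]
    rw [h5, h2, h3, h6]
    ring
  rw [key] at hpos
  nlinarith [hpos, hsec]
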